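/- Let p be an odd prime and D ∈ ℤ/pℤ a non-square. Then the group (H_{D,ℤ/pℤ}, ⊗) has exactly p + 1 elements and is cyclic: there exists a point (a,b) ∈ H_{D,ℤ/pℤ} such that every element of H_{D,ℤ/pℤ} is an ⊗-power of (a,b). -/

import Mathlib

/-- The Brahmagupta (Pell) product on `R × R`. -/
def pellMul {R : Type*} [CommRing R] (D : R) (P Q : R × R) : R × R :=
  (P.1 * Q.1 + D * P.2 * Q.2, P.2 * Q.1 + P.1 * Q.2)

/-- `n`-th power with respect to the Brahmagupta product (identity `(1,0)`). -/
def pellPow {R : Type*} [CommRing R] (D : R) (P : R × R) : ℕ → R × R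
  | 0 => (1, 0)
  | n + 1 => pellMul D P (pellPow D P n)

/-- The Pell conic `H_{D,R} = {(x, y) : x² − D y² = 1}`. -/
def pellConic {R : Type*} [CommRing R] (D : R) : Set (R × R) :=
  {P | P.1 ^ 2 - D * P.2 ^ 2 = 1}

open Polynomial Subgroup

/-- For an odd prime `p` and a non-square `D ∈ ℤ/pℤ`, the group
`(H_{D,ℤ/pℤ}, ⊗)` has exactly `p + 1` elements and is cyclic. -/
theorem pellConic_card_cyclic (p : ℕ) (hp : p.Prime) (hp2 : p ≠ 2) (D : ZMod p)
    (hD : ∀ c : ZMod p, c ^ 2 ≠ D) :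
    Nat.card (pellConic D) = p + 1 ∧
    ∃ G ∈ pellConic D, ∀ P ∈ pellConic D, ∃ n : ℕ, pellPow D G n = P := by
  haveI : Fact p.Prime := ⟨hp⟩
  have hD0 : D ≠ 0 := fun h => hD 0 (by simp [h])
  have hpodd : p % 2 = 1 := Nat.odd_iff.mp (hp.odd_of_ne_two hp2)
  have hp1 : 1 < p := hp.one_lt
  have hEuler : D ^ (p / 2) = -1 := by
    rcases ZMod.pow_div_two_eq_neg_one_or_one p hD0 with h | h
    · exfalso
      obtain ⟨c, hc⟩ := (ZMod.euler_criterion p hD0).mpr h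
      exact hD c (by rw [sq]; exact hc.symm)
    · exact h
  -- the quadratic extension `K = 𝔽_p(√D)`
  set f : Polynomial (ZMod p) := X ^ 2 - C D with hfdef
  have hfm : f.Monic := monic_X_pow_sub_C D (by norm_num)
  have hfd : f.natDegree = 2 := natDegree_X_pow_sub_C
  have hirr : Irreducible f := by
    rw [Polynomial.irreducible_iff_roots_eq_zero_of_degree_le_three (by rw [hfd])
      (by rw [hfd]; norm_num)]
    rw [Multiset.eq_zero_iff_forall_notMem]
    intro c hc
    rw [Polynomial.mem_roots'] at hc
    have h2 := hc.2
    simp only [IsRoot, hfdef, eval_sub, eval_pow, eval_X, eval_C, sub_eq_zero] at h2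
    exact hD c h2
  haveI : Fact (Irreducible f) := ⟨hirr⟩
  set s : AdjoinRoot f := AdjoinRoot.root f with hs
  set ι : ZMod p →+* AdjoinRoot f := algebraMap (ZMod p) (AdjoinRoot f) with hι
  have hιinj : Function.Injective ι := ι.injective
  have hs2 : s ^ 2 = ι D := by
    have h0 : AdjoinRoot.mk f (X ^ 2 - C D) = 0 := by rw [← hfdef]; exact AdjoinRoot.mk_self
    rw [map_sub, map_pow, AdjoinRoot.mk_X, AdjoinRoot.mk_C, sub_eq_zero] at h0
    rw [hs, hι, AdjoinRoot.algebraMap_eq]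
    exact h0
  set φ : ZMod p × ZMod p → AdjoinRoot f := fun P => ι P.1 + ι P.2 * s with hφ
  have hφmul : ∀ P Q, φ (pellMul D P Q) = φ P * φ Q := by
    intro P Q
    show ι (P.1 * Q.1 + D * P.2 * Q.2) + ι (P.2 * Q.1 + P.1 * Q.2) * s
        = (ι P.1 + ι P.2 * s) * (ι Q.1 + ι Q.2 * s)
    simp only [map_add, map_mul]
    linear_combination (-(ι P.2 * ι Q.2)) * hs2
  have hkey : ∀ x y : ZMod p, ι x + ι y * s = 0 → x = 0 ∧ y = 0 := by
    intro x y hxy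
    by_cases hy : y = 0
    · refine ⟨hιinj ?_, hy⟩
      rw [hy] at hxy; simpa using hxy
    · exfalso
      have h2 : x ^ 2 = y ^ 2 * D := by
        apply hιinj
        rw [map_mul, map_pow, map_pow, ← hs2]
        linear_combination (ι x - ι y * s) * hxy
      apply hD (x / y)
      field_simp
      linear_combination h2
  have hφinj : Function.Injective φ := by
    intro P Q h
    have h2 : ι (P.1 - Q.1) + ι (P.2 - Q.2) * s = 0 := by
      simp only [map_sub]
      simp only [hφ] at h
      linear_combination h
    obtain ⟨e1, e2⟩ := hkey _ _ h2
    exact Prod.ext (sub_eq_zero.mp e1) (sub_eq_zero.mp e2)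
  have hφsurj : Function.Surjective φ := by
    intro z
    obtain ⟨g, rfl⟩ := AdjoinRoot.mk_surjective z
    have h1 : AdjoinRoot.mk f (g %ₘ f) = AdjoinRoot.mk f g := by
      rw [AdjoinRoot.mk_eq_mk, modByMonic_eq_sub_mul_div _ f]
      exact ⟨-(g /ₘ f), by ring⟩
    have hdeg : (g %ₘ f).natDegree ≤ 1 := by
      have := natDegree_modByMonic_lt g hfm (fun h1 => by simp [h1] at hfd)
      omega
    obtain ⟨a, b, h2⟩ := exists_eq_X_add_C_of_natDegree_le_one hdeg
    refine ⟨(b, a), ?_⟩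
    show ι b + ι a * s = AdjoinRoot.mk f g
    rw [← h1, h2, map_add, map_mul, AdjoinRoot.mk_X, AdjoinRoot.mk_C, AdjoinRoot.mk_C,
      hι, AdjoinRoot.algebraMap_eq, hs]
    ring
  -- Frobenius and the norm form
  haveI hcharP : CharP (AdjoinRoot f) p := by
    rw [hι] at hιinj
    exact charP_of_injective_algebraMap hιinj p
  haveI : ExpChar (AdjoinRoot f) p := ExpChar.prime hp
  have hsp : s ^ p = -s := by
    have hpe : p = 2 * (p / 2) + 1 := by omega
    calc s ^ p = (s ^ 2) ^ (p / 2) * s := by rw [← pow_mul, ← pow_succ, ← hpe]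
    _ = ι (D ^ (p / 2)) * s := by rw [hs2, map_pow]
    _ = -s := by rw [hEuler, map_neg, map_one]; ring
  have hfrob : ∀ x y : ZMod p, (φ (x, y)) ^ p = φ (x, -y) := by
    intro x y
    show (ι x + ι y * s) ^ p = ι x + ι (-y) * s
    rw [add_pow_char, mul_pow, ← map_pow, ← map_pow, ZMod.pow_card, ZMod.pow_card, hsp,
      map_neg]
    ring
  have hnorm : ∀ P : ZMod p × ZMod p, (φ P) ^ (p + 1) = ι (P.1 ^ 2 - D * P.2 ^ 2) := by
    intro P
    rw [pow_succ, show φ P = φ (P.1, P.2) from rfl, hfrob P.1 P.2, ← hφmul]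
    show ι _ + ι _ * s = _
    simp only [pellMul]
    rw [map_sub, map_mul, map_pow, map_pow]
    simp only [map_add, map_mul, map_neg]
    ring
  have hmem : ∀ P : ZMod p × ZMod p, P ∈ pellConic D ↔ (φ P) ^ (p + 1) = 1 := by
    intro P
    rw [hnorm]
    constructor
    · intro h
      rw [show P.1 ^ 2 - D * P.2 ^ 2 = 1 from h, map_one]
    · intro h
      exact hιinj (by rw [h, map_one])
  -- finiteness and cardinality of `K`
  haveI : Module.Finite (ZMod p) (AdjoinRoot f) := (AdjoinRoot.powerBasis hfm.ne_zero).finite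
  haveI : Finite (AdjoinRoot f) := Module.finite_of_finite (ZMod p)
  haveI : Fintype (AdjoinRoot f) := Fintype.ofFinite _
  have hfin : Module.finrank (ZMod p) (AdjoinRoot f) = 2 := by
    rw [(AdjoinRoot.powerBasis hfm.ne_zero).finrank]
    exact hfd
  have hcardK : Fintype.card (AdjoinRoot f) = p ^ 2 := by
    rw [Module.card_eq_pow_finrank (K := ZMod p) (V := AdjoinRoot f), ZMod.card, hfin]
  have hcardU : Nat.card (AdjoinRoot f)ˣ = p ^ 2 - 1 := by
    rw [Nat.card_units, Nat.card_eq_fintype_card, hcardK]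
  -- a generator of `Kˣ` and the element `h` of order `p + 1`
  obtain ⟨g, hg⟩ := IsCyclic.exists_monoid_generator (α := (AdjoinRoot f)ˣ)
  have hog : orderOf g = p ^ 2 - 1 := by
    rw [orderOf_eq_card_of_forall_mem_zpowers
      (fun x => mem_powers_iff_mem_zpowers.mp (hg x))]
    simpa [Nat.card_eq_fintype_card] using hcardU
  have hfact : p ^ 2 - 1 = (p - 1) * (p + 1) := by
    obtain ⟨q, rfl⟩ : ∃ q, p = q + 1 := ⟨p - 1, by omega⟩
    have h1 : (q + 1) ^ 2 = q * (q + 1 + 1) + 1 := by ring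
    simp only [Nat.add_sub_cancel]
    omega
  set h : (AdjoinRoot f)ˣ := g ^ (p - 1) with hh
  have hoh : orderOf h = p + 1 := by
    rw [hh, orderOf_pow, hog, hfact, Nat.gcd_eq_right ⟨p + 1, rfl⟩,
      Nat.mul_div_cancel_left _ (by omega : 0 < p - 1)]
  have hhpow : (h : AdjoinRoot f) ^ (p + 1) = 1 := by
    have : h ^ (p + 1) = 1 := by rw [← hoh]; exact pow_orderOf_eq_one h
    calc (h : AdjoinRoot f) ^ (p + 1) = ((h ^ (p + 1) : (AdjoinRoot f)ˣ) : AdjoinRoot f) := by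
          push_cast; ring
    _ = 1 := by rw [this]; rfl
  -- every Pell conic point is a power of `h`
  have hmain : ∀ P ∈ pellConic D, ∃ m : ℕ, φ P = (h : AdjoinRoot f) ^ m := by
    intro P hP
    have h1 : (φ P) ^ (p + 1) = 1 := (hmem P).mp hP
    have hP0 : φ P ≠ 0 := by
      intro h0
      rw [h0] at h1
      simp [zero_pow] at h1
    obtain ⟨k, hk⟩ := hg (Units.mk0 (φ P) hP0)
    have h2 : (g ^ k) ^ (p + 1) = 1 := by
      ext
      push_cast [hk]
      exact h1
    have h3 : orderOf g ∣ k * (p + 1) := by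
      apply orderOf_dvd_of_pow_eq_one
      rw [pow_mul]
      exact h2
    rw [hog, hfact] at h3
    have h4 : (p - 1) ∣ k := by
      have := (Nat.mul_dvd_mul_iff_right (by omega : 0 < p + 1)).mp h3
      exact this
    obtain ⟨m, rfl⟩ := h4
    refine ⟨m, ?_⟩
    have hk' : g ^ ((p - 1) * m) = Units.mk0 (φ P) hP0 := hk
    have : h ^ m = Units.mk0 (φ P) hP0 := by
      rw [hh, ← pow_mul, hk']
    calc φ P = ((Units.mk0 (φ P) hP0 : (AdjoinRoot f)ˣ) : AdjoinRoot f) := rfl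
    _ = ((h ^ m : (AdjoinRoot f)ˣ) : AdjoinRoot f) := by rw [this]
    _ = (h : AdjoinRoot f) ^ m := by push_cast; ring
  -- `φ` maps the Pell conic onto the coercion of `zpowers h`
  have hset : φ '' (pellConic D) = ((↑) : (AdjoinRoot f)ˣ → AdjoinRoot f) '' (zpowers h) := by
    ext z
    constructor
    · rintro ⟨P, hP, rfl⟩
      obtain ⟨m, hm⟩ := hmain P hP
      refine ⟨h ^ m, ⟨m, rfl⟩, ?_⟩
      rw [hm]; push_cast; ring
    · rintro ⟨u, hu, rfl⟩
      obtain ⟨m, hm⟩ := mem_powers_iff_mem_zpowers.mpr hu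
      obtain ⟨P, hP⟩ := hφsurj (u : AdjoinRoot f)
      refine ⟨P, ?_, hP⟩
      have hm' : h ^ m = u := hm
      rw [hmem, hP, ← hm']
      have e : ((h ^ m : (AdjoinRoot f)ˣ) : AdjoinRoot f) ^ (p + 1)
          = ((h : AdjoinRoot f) ^ (p + 1)) ^ m := by
        push_cast
        rw [← pow_mul, mul_comm, pow_mul]
      rw [e, hhpow, one_pow]
  -- cardinality
  have hcard1 : Nat.card (pellConic D) = p + 1 := by
    have e1 : Nat.card (φ '' pellConic D) = Nat.card (pellConic D) :=
      Nat.card_image_of_injective hφinj _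
    have e2 : Nat.card (((↑) : (AdjoinRoot f)ˣ → AdjoinRoot f) '' (zpowers h : Set (AdjoinRoot f)ˣ))
        = Nat.card ((zpowers h : Set (AdjoinRoot f)ˣ)) :=
      Nat.card_image_of_injective Units.val_injective _
    rw [← e1, hset, e2]
    have := (Nat.card_zpowers h).trans hoh
    simpa using this
  -- the generator
  obtain ⟨G, hG⟩ := hφsurj (h : AdjoinRoot f)
  have hGmem : G ∈ pellConic D := by
    rw [hmem, hG, hhpow]
  have hpowφ : ∀ (Q : ZMod p × ZMod p) (n : ℕ), φ (pellPow D Q n) = (φ Q) ^ n := by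
    intro Q n
    induction n with
    | zero =>
        show ι 1 + ι 0 * s = 1
        simp
    | succ n ih =>
        show φ (pellMul D Q (pellPow D Q n)) = _
        rw [hφmul, ih, pow_succ]
        ring
  refine ⟨hcard1, G, hGmem, ?_⟩
  intro P hP
  obtain ⟨m, hm⟩ := hmain P hP
  refine ⟨m, hφinj ?_⟩
  rw [hpowφ, hG, hm]
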